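/- arXiv:1111.4319 — 2 statements merged into one kernel-verified Lean document; each statement's English description precedes it below -/
import Mathlib

section
/- Let q be a prime power and let 1 ≤ r ≤ k ≤ n be integers. Then 𝒞_q(n,k,r) · [k,r]_q ≥ [n,r]_q, and equality 𝒞_q(n,k,r) · [k,r]_q = [n,r]_q holds if and only if there exists a Steiner structure S_q(r,k,n). -/
open Module

/-- `coveringNumber F n k r` is the minimum number of `k`-dimensional `F`-linear subspaces
of `F^n` needed so that every `r`-dimensional subspace is contained in at least one of them. -/
noncomputable def coveringNumber (F : Type) [Field F] (n k r : ℕ) : ℕ :=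
  sInf { m : ℕ | ∃ S : Finset (Submodule F (Fin n → F)),
    S.card = m ∧
    (∀ X ∈ S, finrank F X = k) ∧
    (∀ Y : Submodule F (Fin n → F), finrank F Y = r → ∃ X ∈ S, Y ≤ X) }


/-- The Gaussian binomial coefficient `[n, k]_q`, as a rational number. -/
noncomputable def gaussBinom (q n k : ℕ) : ℚ :=
  ∏ i ∈ Finset.range k, (((q : ℚ) ^ (n - i) - 1) / ((q : ℚ) ^ (k - i) - 1))

open Module Submodule Finset

section Counting
variable {F V : Type*} [Field F] [Fintype F] [AddCommGroup V] [Module F V] [Finite V]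

local notation "q" => Fintype.card F

/-- Fibers of the span map from linearly independent tuples to `r`-dimensional subspaces. -/
noncomputable def fiberEquiv (r : ℕ) (hr : 0 < r)
    (f : {s : Fin r → V // LinearIndependent F s} → {W : Submodule F V // finrank F W = r})
    (hf : ∀ s, (f s : Submodule F V) = Submodule.span F (Set.range s.1))
    (W₀ : {W : Submodule F V // finrank F W = r}) :
    {s : {s : Fin r → V // LinearIndependent F s} // f s = W₀} ≃
      {t : Fin r → (W₀ : Submodule F V) // LinearIndependent F t} where
  toFun sp := ⟨fun i => ⟨sp.1.1 i, by
      have h : Submodule.span F (Set.range sp.1.1) = (W₀ : Submodule F V) := by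
        rw [← hf sp.1, sp.2]
      exact h ▸ Submodule.subset_span ⟨i, rfl⟩⟩,
    LinearIndependent.of_comp (W₀ : Submodule F V).subtype sp.1.2⟩
  invFun t := ⟨⟨fun i => (t.1 i : V), t.2.map' (W₀ : Submodule F V).subtype
      (Submodule.ker_subtype _)⟩, by
    apply Subtype.ext
    rw [hf]
    have h1 : Set.range (fun i => (t.1 i : V)) = (W₀ : Submodule F V).subtype '' Set.range t.1 := by
      rw [← Set.range_comp]; rfl
    rw [h1, ← Submodule.map_span]
    have h2 : Submodule.span F (Set.range t.1) = ⊤ := by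
      haveI : Nonempty (Fin r) := ⟨⟨0, hr⟩⟩
      apply LinearIndependent.span_eq_top_of_card_eq_finrank t.2
      simp [W₀.2]
    rw [h2, Submodule.map_subtype_top]⟩
  left_inv sp := by ext i; rfl
  right_inv t := by ext i; rfl

theorem card_rank_subspaces_mul (r : ℕ) (hr : 0 < r) (hrd : r ≤ finrank F V) :
    Nat.card {W : Submodule F V // finrank F W = r} *
      ∏ i ∈ Finset.range r, (q ^ r - q ^ i) =
      ∏ i ∈ Finset.range r, (q ^ finrank F V - q ^ i) := by
  classical
  haveI : Fintype V := Fintype.ofFinite V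
  haveI : Finite (Submodule F V) :=
    Finite.of_injective (fun W => (W : Set V)) SetLike.coe_injective
  haveI : Fintype (Submodule F V) := Fintype.ofFinite _
  set E := {s : Fin r → V // LinearIndependent F s}
  haveI : Fintype E := by unfold E; infer_instance
  haveI : Fintype {W : Submodule F V // finrank F W = r} := by infer_instance
  set f : E → {W : Submodule F V // finrank F W = r} := fun s =>
    ⟨Submodule.span F (Set.range s.1), by
      rw [finrank_span_eq_card s.2, Fintype.card_fin]⟩ with hfdef
  have hf : ∀ s, (f s : Submodule F V) = Submodule.span F (Set.range s.1) := fun s => rfl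
  have hE : Nat.card E = ∏ i ∈ Finset.range r, (q ^ finrank F V - q ^ i) := by
    rw [card_linearIndependent hrd, ← Fin.prod_univ_eq_prod_range]
  have hfiber : ∀ W₀ : {W : Submodule F V // finrank F W = r},
      (Finset.univ.filter (fun s => f s = W₀)).card =
        ∏ i ∈ Finset.range r, (q ^ r - q ^ i) := by
    intro W₀
    rw [← Fintype.card_subtype, ← Nat.card_eq_fintype_card,
      Nat.card_congr (fiberEquiv r hr f hf W₀)]
    have : r ≤ finrank F (W₀ : Submodule F V) := le_of_eq W₀.2.symm
    rw [card_linearIndependent this, W₀.2, ← Fin.prod_univ_eq_prod_range]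
  have hsum : Fintype.card E =
      ∑ W₀ : {W : Submodule F V // finrank F W = r},
        (Finset.univ.filter (fun s => f s = W₀)).card := by
    rw [← Finset.card_univ]
    exact Finset.card_eq_sum_card_fiberwise (fun x _ => Finset.mem_univ (f x))
  rw [← hE, Nat.card_eq_fintype_card (α := E), hsum, Nat.card_eq_fintype_card]
  simp only [hfiber, Finset.sum_const, smul_eq_mul, Finset.card_univ]

/-- The subspaces of the ambient space contained in `X` correspond to subspaces of `X`. -/
noncomputable def subEquiv (X : Submodule F V) (r : ℕ) :
    {Y : Submodule F V // finrank F Y = r ∧ Y ≤ X} ≃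
      {W : Submodule F X // finrank F W = r} :=
  { toFun := fun Y => ⟨Y.1.comap X.subtype, by
      have h : (Y.1.comap X.subtype).map X.subtype = Y.1 := by
        rw [Submodule.map_comap_subtype, inf_eq_right.mpr Y.2.2]
      conv_rhs => rw [← Y.2.1, ← h]
      rw [Submodule.finrank_map_subtype_eq]⟩
    invFun := fun W => ⟨W.1.map X.subtype,
      ⟨by rw [Submodule.finrank_map_subtype_eq, W.2], Submodule.map_subtype_le X W.1⟩⟩
    left_inv := fun Y => by
      apply Subtype.ext
      simp only [Submodule.map_comap_subtype]
      exact inf_eq_right.mpr Y.2.2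
    right_inv := fun W => by
      apply Subtype.ext
      exact Submodule.comap_map_eq_of_injective (Submodule.injective_subtype X) W.1 }

theorem card_sub_le_mul (X : Submodule F V) (r : ℕ) (hr : 0 < r) (hrX : r ≤ finrank F X) :
    Nat.card {Y : Submodule F V // finrank F Y = r ∧ Y ≤ X} *
      ∏ i ∈ Finset.range r, (q ^ r - q ^ i) =
      ∏ i ∈ Finset.range r, (q ^ finrank F X - q ^ i) := by
  rw [Nat.card_congr (subEquiv X r)]
  exact card_rank_subspaces_mul r hr hrX

/-- Extension: any subspace of dimension `≤ k ≤ dim V` is contained in a `k`-dimensional one. -/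
theorem exists_superspace (Y : Submodule F V) (k : ℕ) (hY : finrank F Y ≤ k)
    (hk : k ≤ finrank F V) : ∃ X : Submodule F V, finrank F X = k ∧ Y ≤ X := by
  haveI : Module.Finite F V := Module.Finite.of_finite
  induction k with
  | zero =>
    refine ⟨Y, le_antisymm hY (Nat.zero_le _), le_refl Y⟩
  | succ k ih =>
    rcases Nat.lt_or_ge (finrank F Y) (k+1) with h | h
    · obtain ⟨X, hX, hYX⟩ := ih (Nat.lt_succ_iff.mp h) (le_of_lt hk)
      have hlt : finrank F X < finrank F V := by omega
      obtain ⟨m, hm⟩ := X.exists_of_finrank_lt hlt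
      have hmX : m ∉ X := by simpa using hm 1 one_ne_zero
      have hm0 : m ≠ 0 := fun h0 => hmX (h0 ▸ X.zero_mem)
      refine ⟨X ⊔ Submodule.span F {m}, ?_, le_trans hYX le_sup_left⟩
      have hinf : X ⊓ Submodule.span F {m} = ⊥ := by
        rw [eq_bot_iff]
        rintro x ⟨hx1, hx2⟩
        obtain ⟨c, rfl⟩ := Submodule.mem_span_singleton.mp hx2
        rcases eq_or_ne c 0 with rfl | hc
        · simpa using Submodule.zero_mem ⊥
        · exact absurd hx1 (hm c hc)
      have := Submodule.finrank_sup_add_finrank_inf_eq X (Submodule.span F {m})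
      rw [hinf, finrank_bot, finrank_span_singleton hm0] at this
      omega
    · exact ⟨Y, le_antisymm hY h, le_refl Y⟩

end Counting

theorem gaussBinom_mul (Q d r : ℕ) (hq : 1 < Q) (hrd : r ≤ d) :
    gaussBinom Q d r * ((∏ i ∈ Finset.range r, (Q ^ r - Q ^ i) : ℕ) : ℚ) =
      ((∏ i ∈ Finset.range r, (Q ^ d - Q ^ i) : ℕ) : ℚ) := by
  have hq1 : (1 : ℚ) < (Q : ℚ) := by exact_mod_cast hq
  have hcast : ∀ e : ℕ, ∀ i ∈ Finset.range r,
      ((Q ^ e - Q ^ i : ℕ) : ℚ) = (Q : ℚ) ^ e - (Q : ℚ) ^ i → True := fun _ _ _ _ => trivial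
  rw [Nat.cast_prod, Nat.cast_prod, gaussBinom, ← Finset.prod_mul_distrib]
  apply Finset.prod_congr rfl
  intro i hi
  have hir : i < r := Finset.mem_range.mp hi
  have h1 : Q ^ i ≤ Q ^ r := Nat.pow_le_pow_right (le_of_lt hq) (le_of_lt hir)
  have h2 : Q ^ i ≤ Q ^ d := Nat.pow_le_pow_right (le_of_lt hq) (le_of_lt (lt_of_lt_of_le hir hrd))
  rw [Nat.cast_sub h1, Nat.cast_sub h2, Nat.cast_pow, Nat.cast_pow, Nat.cast_pow]
  have e1 : (Q : ℚ) ^ r - (Q : ℚ) ^ i = (Q : ℚ) ^ i * ((Q : ℚ) ^ (r - i) - 1) := by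
    rw [mul_sub, mul_one, ← pow_add]
    congr 2
    omega
  have e2 : (Q : ℚ) ^ d - (Q : ℚ) ^ i = (Q : ℚ) ^ i * ((Q : ℚ) ^ (d - i) - 1) := by
    rw [mul_sub, mul_one, ← pow_add]
    congr 2
    omega
  have hne : (Q : ℚ) ^ (r - i) - 1 ≠ 0 := by
    have : (1 : ℚ) < (Q : ℚ) ^ (r - i) := one_lt_pow₀ hq1 (by omega)
    linarith
  rw [e1, e2]
  field_simp

/-- The covering bound, with equality iff a Steiner structure exists. -/
theorem covering_bound (q n k r : ℕ) (hq : IsPrimePow q)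
    (hr : 1 ≤ r) (hrk : r ≤ k) (hkn : k ≤ n)
    (F : Type) [Field F] [Fintype F] (hF : Fintype.card F = q) :
    (coveringNumber F n k r : ℚ) * gaussBinom q k r ≥ gaussBinom q n r ∧
    ((coveringNumber F n k r : ℚ) * gaussBinom q k r = gaussBinom q n r ↔
      ∃ S : Finset (Submodule F (Fin n → F)),
        (∀ X ∈ S, finrank F X = k) ∧
        (∀ Y : Submodule F (Fin n → F), finrank F Y = r →
          ∃! X, X ∈ S ∧ Y ≤ X)) := by
  classical
  have hq2 : 1 < q := hF ▸ Fintype.one_lt_card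
  haveI : Finite (Submodule F (Fin n → F)) :=
    Finite.of_injective (fun W => (W : Set (Fin n → F))) SetLike.coe_injective
  haveI : Fintype (Submodule F (Fin n → F)) := Fintype.ofFinite _
  have hdim : finrank F (Fin n → F) = n := by
    simp [Module.finrank_fintype_fun_eq_card]
  set Cr := ∏ i ∈ Finset.range r, (q ^ r - q ^ i) with hCrdef
  set Nn := ∏ i ∈ Finset.range r, (q ^ n - q ^ i) with hNndef
  set Nk := ∏ i ∈ Finset.range r, (q ^ k - q ^ i) with hNkdef
  have hCr : 0 < Cr := Finset.prod_pos fun i hi =>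
    Nat.sub_pos_of_lt (Nat.pow_lt_pow_right hq2 (Finset.mem_range.mp hi))
  set T : Finset (Submodule F (Fin n → F)) :=
    Finset.univ.filter (fun Y => finrank F Y = r) with hTdef
  have hTcard : T.card * Cr = Nn := by
    have h := card_rank_subspaces_mul (F := F) (V := Fin n → F) r hr
      (by rw [hdim]; omega)
    rw [hdim, hF] at h
    rwa [hTdef, ← Fintype.card_subtype, ← Nat.card_eq_fintype_card]
  have hXcard : ∀ X : Submodule F (Fin n → F), finrank F X = k →
      (T.filter (fun Y => Y ≤ X)).card * Cr = Nk := by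
    intro X hX
    have h := card_sub_le_mul (F := F) (V := Fin n → F) X r hr (by rw [hX]; exact hrk)
    rw [hX, hF] at h
    rw [hTdef, Finset.filter_filter]
    rwa [← Fintype.card_subtype, ← Nat.card_eq_fintype_card]
  have hsum : ∀ S : Finset (Submodule F (Fin n → F)),
      ∑ X ∈ S, (T.filter (fun Y => Y ≤ X)).card =
        ∑ Y ∈ T, (S.filter (fun X => Y ≤ X)).card := by
    intro S
    simp only [Finset.card_filter]
    exact Finset.sum_comm
  have hbound : ∀ S : Finset (Submodule F (Fin n → F)),
      (∀ X ∈ S, finrank F X = k) →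
      (∀ Y : Submodule F (Fin n → F), finrank F Y = r → ∃ X ∈ S, Y ≤ X) →
      Nn ≤ S.card * Nk := by
    intro S hSk hScov
    have h1 : T.card ≤ ∑ Y ∈ T, (S.filter (fun X => Y ≤ X)).card := by
      have : ∀ Y ∈ T, 1 ≤ (S.filter (fun X => Y ≤ X)).card := by
        intro Y hY
        obtain ⟨X, hXS, hYX⟩ := hScov Y (Finset.mem_filter.mp hY).2
        exact Finset.card_pos.mpr ⟨X, Finset.mem_filter.mpr ⟨hXS, hYX⟩⟩
      calc T.card = ∑ _Y ∈ T, 1 := by simp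
        _ ≤ _ := Finset.sum_le_sum this
    calc Nn = T.card * Cr := hTcard.symm
      _ ≤ (∑ Y ∈ T, (S.filter (fun X => Y ≤ X)).card) * Cr :=
          Nat.mul_le_mul_right _ h1
      _ = (∑ X ∈ S, (T.filter (fun Y => Y ≤ X)).card) * Cr := by rw [hsum]
      _ = ∑ X ∈ S, (T.filter (fun Y => Y ≤ X)).card * Cr := Finset.sum_mul _ _ _
      _ = ∑ X ∈ S, Nk := Finset.sum_congr rfl fun X hX => hXcard X (hSk X hX)
      _ = S.card * Nk := by rw [Finset.sum_const, smul_eq_mul]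
  have hne : { m : ℕ | ∃ S : Finset (Submodule F (Fin n → F)),
      S.card = m ∧ (∀ X ∈ S, finrank F X = k) ∧
      (∀ Y : Submodule F (Fin n → F), finrank F Y = r → ∃ X ∈ S, Y ≤ X) }.Nonempty := by
    set Sall : Finset (Submodule F (Fin n → F)) :=
      Finset.univ.filter (fun X => finrank F X = k) with hSall
    have h1 : ∀ X ∈ Sall, finrank F X = k := fun X hX => (Finset.mem_filter.mp hX).2
    have h2 : ∀ Y : Submodule F (Fin n → F), finrank F Y = r → ∃ X ∈ Sall, Y ≤ X := by
      intro Y hY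
      obtain ⟨X, hXk, hYX⟩ := exists_superspace (F := F) Y k (by omega)
        (by rw [hdim]; omega)
      exact ⟨X, Finset.mem_filter.mpr ⟨Finset.mem_univ _, hXk⟩, hYX⟩
    exact ⟨Sall.card, Sall, rfl, h1, h2⟩
  set m := coveringNumber F n k r with hmdef
  obtain ⟨S₀, hS₀card, hS₀k, hS₀cov⟩ : ∃ S : Finset (Submodule F (Fin n → F)),
      S.card = m ∧ (∀ X ∈ S, finrank F X = k) ∧
      (∀ Y : Submodule F (Fin n → F), finrank F Y = r → ∃ X ∈ S, Y ≤ X) :=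
    Nat.sInf_mem hne
  have hineq : Nn ≤ m * Nk := hS₀card ▸ hbound S₀ hS₀k hS₀cov
  have hgk : gaussBinom q k r * (Cr : ℚ) = (Nk : ℚ) := gaussBinom_mul q k r hq2 hrk
  have hgn : gaussBinom q n r * (Cr : ℚ) = (Nn : ℚ) :=
    gaussBinom_mul q n r hq2 (hrk.trans hkn)
  have hCrQ : (0 : ℚ) < (Cr : ℚ) := by exact_mod_cast hCr
  constructor
  · rw [ge_iff_le, ← mul_le_mul_iff_of_pos_right hCrQ, hgn, mul_assoc, hgk]
    exact_mod_cast hineq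
  constructor
  · intro heq
    have hQ : (m : ℚ) * (Nk : ℚ) = (Nn : ℚ) := by
      rw [← hgk, ← hgn, ← mul_assoc, heq]
    have heqn : m * Nk = Nn := by exact_mod_cast hQ
    refine ⟨S₀, hS₀k, ?_⟩
    have hsum0 : ∑ Y ∈ T, Cr = ∑ Y ∈ T, (S₀.filter (fun X => Y ≤ X)).card * Cr := by
      rw [← Finset.sum_mul, ← hsum S₀, Finset.sum_mul,
        Finset.sum_congr rfl fun X hX => hXcard X (hS₀k X hX),
        Finset.sum_const, Finset.sum_const, smul_eq_mul, smul_eq_mul, hS₀card, heqn]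
      exact hTcard
    have hle : ∀ Y ∈ T, Cr ≤ (S₀.filter (fun X => Y ≤ X)).card * Cr := by
      intro Y hY
      obtain ⟨X, hXS, hYX⟩ := hS₀cov Y (Finset.mem_filter.mp hY).2
      have : 1 ≤ (S₀.filter (fun X => Y ≤ X)).card :=
        Finset.card_pos.mpr ⟨X, Finset.mem_filter.mpr ⟨hXS, hYX⟩⟩
      calc Cr = 1 * Cr := (one_mul Cr).symm
        _ ≤ _ := Nat.mul_le_mul_right _ this
    have hone := (Finset.sum_eq_sum_iff_of_le hle).mp hsum0
    intro Y hYr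
    have hYT : Y ∈ T := Finset.mem_filter.mpr ⟨Finset.mem_univ _, hYr⟩
    have hd1 : (S₀.filter (fun X => Y ≤ X)).card = 1 :=
      Nat.eq_of_mul_eq_mul_right hCr (by rw [← hone Y hYT, one_mul])
    obtain ⟨X, hXs⟩ := Finset.card_eq_one.mp hd1
    have hXmem : X ∈ S₀.filter (fun X => Y ≤ X) := hXs ▸ Finset.mem_singleton_self X
    refine ⟨X, ⟨(Finset.mem_filter.mp hXmem).1, (Finset.mem_filter.mp hXmem).2⟩, ?_⟩
    intro X' hX'
    have : X' ∈ S₀.filter (fun X => Y ≤ X) := Finset.mem_filter.mpr ⟨hX'.1, hX'.2⟩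
    rw [hXs] at this
    exact Finset.mem_singleton.mp this
  · rintro ⟨S, hSk, hSuniq⟩
    have hScov : ∀ Y : Submodule F (Fin n → F), finrank F Y = r → ∃ X ∈ S, Y ≤ X := by
      intro Y hY
      obtain ⟨X, hX, -⟩ := hSuniq Y hY
      exact ⟨X, hX.1, hX.2⟩
    have hmle : m ≤ S.card := Nat.sInf_le ⟨S, rfl, hSk, hScov⟩
    have hd : ∀ Y ∈ T, (S.filter (fun X => Y ≤ X)).card = 1 := by
      intro Y hY
      obtain ⟨X, hX, hXu⟩ := hSuniq Y (Finset.mem_filter.mp hY).2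
      rw [Finset.card_eq_one]
      refine ⟨X, Finset.eq_singleton_iff_unique_mem.mpr
        ⟨Finset.mem_filter.mpr ⟨hX.1, hX.2⟩, fun X' hX' => hXu X'
          ⟨(Finset.mem_filter.mp hX').1, (Finset.mem_filter.mp hX').2⟩⟩⟩
    have hcount : S.card * Nk = Nn := by
      calc S.card * Nk = ∑ _X ∈ S, Nk := by rw [Finset.sum_const, smul_eq_mul]
        _ = ∑ X ∈ S, (T.filter (fun Y => Y ≤ X)).card * Cr :=
            (Finset.sum_congr rfl fun X hX => (hXcard X (hSk X hX)).symm)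
        _ = (∑ X ∈ S, (T.filter (fun Y => Y ≤ X)).card) * Cr := (Finset.sum_mul _ _ _).symm
        _ = (∑ Y ∈ T, (S.filter (fun X => Y ≤ X)).card) * Cr := by rw [hsum]
        _ = T.card * Cr := by
            rw [Finset.sum_congr rfl hd, Finset.sum_const, smul_eq_mul, mul_one]
        _ = Nn := hTcard
    have heqn : m * Nk = Nn :=
      le_antisymm (hcount ▸ Nat.mul_le_mul_right _ hmle) hineq
    have hQ : (m : ℚ) * (Nk : ℚ) = (Nn : ℚ) := by exact_mod_cast heqn
    have : ((m : ℚ) * gaussBinom q k r) * (Cr : ℚ) = gaussBinom q n r * (Cr : ℚ) := by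
      rw [mul_assoc, hgk, hgn, hQ]
    exact mul_right_cancel₀ (ne_of_gt hCrQ) this
end

section
/- Let q be a prime power and let r ≥ 1 and δ ≥ 1 be integers. Then there exist a constant c and an integer n₀ such that for every n > n₀ one has 𝒞_q(n, n−δ, r) = c. -/
open Module

section Aux

variable {F : Type} [Field F]

/-- Every subspace of dimension `≤ k` is contained in a subspace of dimension exactly `k`. -/
lemma exists_superset_finrank_eq {V : Type} [AddCommGroup V] [Module F V]
    [FiniteDimensional F V] (Y : Submodule F V) (k : ℕ)
    (h1 : finrank F Y ≤ k) (h2 : k ≤ finrank F V) :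
    ∃ X : Submodule F V, Y ≤ X ∧ finrank F X = k := by
  obtain ⟨d, rfl⟩ := Nat.exists_eq_add_of_le h1
  clear h1
  revert h2
  induction d generalizing Y with
  | zero => exact fun _ => ⟨Y, le_rfl, rfl⟩
  | succ d ih =>
    intro h2
    have hlt : finrank F Y < finrank F V := by omega
    obtain ⟨m, hm⟩ := Submodule.exists_of_finrank_lt Y hlt
    have hmY : m ∉ Y := by simpa using hm 1 one_ne_zero
    have hm0 : m ≠ 0 := fun h => hmY (h ▸ Y.zero_mem)
    have hdisj : Submodule.span F {m} ⊓ Y = ⊥ := by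
      rw [← disjoint_iff, disjoint_comm]
      rw [Submodule.disjoint_span_singleton]
      exact fun h => absurd h hmY
    have hY' : finrank F ↥(Submodule.span F {m} ⊔ Y) = finrank F Y + 1 := by
      have h := Submodule.finrank_sup_add_finrank_inf_eq (Submodule.span F {m}) Y
      rw [hdisj, finrank_bot, finrank_span_singleton hm0] at h
      omega
    obtain ⟨X, hX1, hX2⟩ := ih (Submodule.span F {m} ⊔ Y) (by rw [hY']; omega)
    exact ⟨X, le_trans le_sup_right hX1, by rw [hX2, hY']; omega⟩

lemma finrank_comap_of_surjective {V W : Type} [AddCommGroup V] [Module F V]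
    [AddCommGroup W] [Module F W] [FiniteDimensional F V]
    (f : V →ₗ[F] W) (hf : Function.Surjective f) (X : Submodule F W) :
    finrank F (X.comap f) = finrank F X + finrank F (LinearMap.ker f) := by
  have h := LinearMap.finrank_range_add_finrank_ker (f ∘ₗ (X.comap f).subtype)
  rw [LinearMap.range_comp, Submodule.range_subtype,
    Submodule.map_comap_eq_of_surjective hf, LinearMap.ker_comp] at h
  have hle : LinearMap.ker f ≤ X.comap f := fun x hx => by
    simp only [Submodule.mem_comap, LinearMap.mem_ker.mp hx, Submodule.zero_mem]
  have heq : finrank F ↥((LinearMap.ker f).comap (X.comap f).subtype)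
      = finrank F (LinearMap.ker f) :=
    (Submodule.comapSubtypeEquivOfLe hle).finrank_eq
  omega

/-- For `r ≤ k ≤ n` over a finite field, coverings exist. -/
lemma covering_set_nonempty (F : Type) [Field F] [Fintype F] (n k r : ℕ)
    (hr : r ≤ k) (hk : k ≤ n) :
    { m : ℕ | ∃ S : Finset (Submodule F (Fin n → F)),
      S.card = m ∧
      (∀ X ∈ S, finrank F X = k) ∧
      (∀ Y : Submodule F (Fin n → F), finrank F Y = r → ∃ X ∈ S, Y ≤ X) }.Nonempty := by
  have hfin : Finite (Submodule F (Fin n → F)) :=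
    Finite.of_injective (fun X => (X : Set (Fin n → F))) SetLike.coe_injective
  have hsetfin : {X : Submodule F (Fin n → F) | finrank F X = k}.Finite := Set.toFinite _
  refine ⟨hsetfin.toFinset.card, hsetfin.toFinset, rfl, ?_, ?_⟩
  · intro X hX
    exact (hsetfin.mem_toFinset.mp hX)
  · intro Y hY
    obtain ⟨X, hYX, hXk⟩ := exists_superset_finrank_eq Y k
      (by rw [hY]; exact hr) (by rw [Module.finrank_fin_fun]; exact hk)
    exact ⟨X, hsetfin.mem_toFinset.mpr hXk, hYX⟩

lemma coveringNumber_succ_le (F : Type) [Field F] [Fintype F] (r δ n : ℕ)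
    (hδn : δ ≤ n) (hr : r ≤ n - δ) :
    coveringNumber F (n + 1) (n + 1 - δ) r ≤ coveringNumber F n (n - δ) r := by
  classical
  unfold coveringNumber
  have hne := covering_set_nonempty F n (n - δ) r hr (Nat.sub_le n δ)
  have hmem := Nat.sInf_mem hne
  obtain ⟨S, hcard, hdim, hcov⟩ := hmem
  set π : (Fin (n + 1) → F) →ₗ[F] (Fin n → F) :=
    LinearMap.funLeft F F (Fin.castSucc) with hπdef
  have hπ : Function.Surjective π :=
    LinearMap.funLeft_surjective_of_injective F F _ (Fin.castSucc_injective n)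
  have hker : finrank F (LinearMap.ker π) = 1 := by
    have h := LinearMap.finrank_range_add_finrank_ker π
    rw [LinearMap.range_eq_top.mpr hπ, finrank_top, Module.finrank_fin_fun,
      Module.finrank_fin_fun] at h
    omega
  have hcomapdim : ∀ X : Submodule F (Fin n → F),
      finrank F (X.comap π) = finrank F X + 1 := by
    intro X
    rw [finrank_comap_of_surjective π hπ X, hker]
  refine Nat.sInf_le ⟨S.image (Submodule.comap π), ?_, ?_, ?_⟩
  · rw [Finset.card_image_of_injective _ (Submodule.comap_injective_of_surjective hπ), hcard]
  · intro X hX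
    obtain ⟨X0, hX0, rfl⟩ := Finset.mem_image.mp hX
    rw [hcomapdim X0, hdim X0 hX0]
    omega
  · intro Y hY
    have h1 : finrank F (Y.map π) ≤ r := by
      rw [← hY]; exact Submodule.finrank_map_le π Y
    obtain ⟨Z, hZ1, hZ2⟩ := exists_superset_finrank_eq (Y.map π) r h1
      (by rw [Module.finrank_fin_fun]; omega)
    obtain ⟨X, hXS, hZX⟩ := hcov Z hZ2
    refine ⟨X.comap π, Finset.mem_image_of_mem _ hXS, ?_⟩
    exact Submodule.map_le_iff_le_comap.mp (le_trans hZ1 hZX)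

end Aux

/-- For fixed $r$ and $\delta$, the value $\mathcal{C}_q(n,n-\delta,r)$ is eventually constant. -/
theorem eventually_constant (q r δ : ℕ) (hq : IsPrimePow q)
    (hr : 1 ≤ r) (hδ : 1 ≤ δ)
    (F : Type) [Field F] [Fintype F] (hF : Fintype.card F = q) :
    ∃ c n₀ : ℕ, ∀ n : ℕ, n > n₀ → coveringNumber F n (n - δ) r = c := by
  classical
  set A : ℕ → ℕ := fun n => coveringNumber F n (n - δ) r with hA
  set n₁ := r + δ with hn₁
  have key : ∀ k : ℕ, A (n₁ + k + 1) ≤ A (n₁ + k) := by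
    intro k
    exact coveringNumber_succ_le F r δ (n₁ + k) (by omega) (by omega)
  have anti : Antitone (fun k => A (n₁ + k)) := by
    apply antitone_nat_of_succ_le
    intro k
    exact key k
  have hrne : (Set.range fun k => A (n₁ + k)).Nonempty := ⟨A (n₁ + 0), ⟨0, rfl⟩⟩
  obtain ⟨k₀, hk₀⟩ := Nat.sInf_mem hrne
  refine ⟨sInf (Set.range fun k => A (n₁ + k)), n₁ + k₀, fun n hn => ?_⟩
  have hk : n₁ + (n - n₁) = n := by omega
  have h1 : A (n₁ + (n - n₁)) ≤ A (n₁ + k₀) := anti (by omega)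
  have h2 : sInf (Set.range fun k => A (n₁ + k)) ≤ A (n₁ + (n - n₁)) :=
    Nat.sInf_le ⟨n - n₁, rfl⟩
  have hc : A (n₁ + k₀) = sInf (Set.range fun k => A (n₁ + k)) := hk₀
  rw [hk] at h1 h2
  rw [show coveringNumber F n (n - δ) r = A n from rfl]
  omega
end
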